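/- arXiv:1309.5543 — 3 statements merged into one kernel-verified Lean document; each statement's English description precedes it below -/
import Mathlib

section
/- Let D be a bounded open connected set in ℝ^d and let X : closure(D) → closure(D) be continuous, C¹ on D with bounded continuous first derivatives, with X(x) = x for x ∈ ∂D. Suppose det DX ≥ 0 on D and X restricted to a neighborhood of each point of D is a homeomorphism onto its image. Then Vol(D) = ∫_D det DX(x) dx. -/
open MeasureTheory
open scoped ENNReal

section Aux

variable {d : ℕ}

private lemma coord_abs_le_norm' (x : EuclideanSpace ℝ (Fin d)) (i : Fin d) : |x i| ≤ ‖x‖ := by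
  rw [EuclideanSpace.norm_eq]
  calc |x i| = Real.sqrt (|x i| ^ 2) := (Real.sqrt_sq (abs_nonneg _)).symm
    _ ≤ _ := Real.sqrt_le_sqrt (Finset.single_le_sum
        (f := fun j => ‖x j‖ ^ 2) (fun j _ => sq_nonneg _) (Finset.mem_univ i))

/-- Mean value bound along a half-open segment contained in `D`. -/
private lemma seg_lipschitz' {D : Set (EuclideanSpace ℝ (Fin d))}
    {X : EuclideanSpace ℝ (Fin d) → EuclideanSpace ℝ (Fin d)}
    (hXc : ContinuousOn X (closure D))
    (hdiff : ∀ z ∈ D, HasFDerivAt X (fderiv ℝ X z) z)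
    {C : ℝ} (hC : ∀ z ∈ D, ‖fderiv ℝ X z‖ ≤ C)
    {x p : EuclideanSpace ℝ (Fin d)} (hx : x ∈ D) (hp : p ∈ closure D)
    (hseg : ∀ t : ℝ, 0 ≤ t → t < 1 → x + t • (p - x) ∈ D) :
    ‖X p - X x‖ ≤ C * ‖p - x‖ := by
  have hCnn : 0 ≤ C := le_trans (norm_nonneg _) (hC x hx)
  have key : ∀ τ : ℝ, 0 ≤ τ → τ < 1 → ‖X (x + τ • (p - x)) - X x‖ ≤ C * ‖p - x‖ := by
    intro τ hτ0 hτ1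
    set q := x + τ • (p - x) with hq
    have hsD : segment ℝ x q ⊆ D := by
      intro z hz
      rw [segment_eq_image'] at hz
      obtain ⟨t, ht, rfl⟩ := hz
      have he : x + t • (q - x) = x + (t * τ) • (p - x) := by
        rw [hq]; module
      show x + t • (q - x) ∈ D
      rw [he]
      exact hseg _ (mul_nonneg ht.1 hτ0) (by nlinarith [ht.1, ht.2])
    have hb := Convex.norm_image_sub_le_of_norm_hasFDerivWithin_le
      (f := X) (f' := fun z => fderiv ℝ X z) (C := C)
      (fun z hz => (hdiff z (hsD hz)).hasFDerivWithinAt)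
      (fun z hz => hC z (hsD hz)) (convex_segment x q)
      (left_mem_segment ℝ x q) (right_mem_segment ℝ x q)
    have : ‖q - x‖ ≤ ‖p - x‖ := by
      have he : q - x = τ • (p - x) := by rw [hq]; abel
      rw [he, norm_smul, Real.norm_eq_abs, abs_of_nonneg hτ0]
      nlinarith [norm_nonneg (p - x)]
    calc ‖X q - X x‖ ≤ C * ‖q - x‖ := hb
      _ ≤ C * ‖p - x‖ := by nlinarith
  set q : ℕ → EuclideanSpace ℝ (Fin d) := fun n => x + (1 - 1/(n+1 : ℝ)) • (p - x) with hqdef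
  have hτ0 : ∀ n : ℕ, (0:ℝ) ≤ 1 - 1/(n+1 : ℝ) := by
    intro n
    have h1 : (1:ℝ)/(n+1) ≤ 1 := by
      rw [div_le_one (by positivity)]; linarith [Nat.cast_nonneg (α := ℝ) n]
    linarith
  have hτ1 : ∀ n : ℕ, 1 - 1/(n+1 : ℝ) < 1 := by
    intro n
    have : (0:ℝ) < 1/(n+1) := by positivity
    linarith
  have hqD : ∀ n, q n ∈ D := fun n => hseg _ (hτ0 n) (hτ1 n)
  have hqlim : Filter.Tendsto q Filter.atTop (nhds p) := by
    have h1 : Filter.Tendsto (fun n : ℕ => 1 - 1/(n+1 : ℝ)) Filter.atTop (nhds 1) := by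
      have := tendsto_one_div_add_atTop_nhds_zero_nat (𝕜 := ℝ)
      have h2 := Filter.Tendsto.const_sub (1:ℝ) this
      simpa using h2
    have h2 := Filter.Tendsto.smul_const h1 (p - x)
    have h3 := Filter.Tendsto.const_add x h2
    simpa [hqdef, one_div] using h3
  have hXlim : Filter.Tendsto (fun n => X (q n)) Filter.atTop (nhds (X p)) := by
    refine (hXc p hp).tendsto.comp ?_
    rw [tendsto_nhdsWithin_iff]
    exact ⟨hqlim, Filter.Eventually.of_forall fun n => subset_closure (hqD n)⟩
  refine le_of_tendsto ((hXlim.sub tendsto_const_nhds).norm) ?_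
  filter_upwards with n
  exact key _ (hτ0 n) (hτ1 n)

/-- First exit point of a segment from `D`. -/
private lemma seg_exit' {D : Set (EuclideanSpace ℝ (Fin d))} (hDo : IsOpen D)
    {x y : EuclideanSpace ℝ (Fin d)} (hx : x ∈ D) (hy : y ∉ D) :
    ∃ c : ℝ, 0 < c ∧ c ≤ 1 ∧ x + c • (y - x) ∈ frontier D ∧
      ∀ t : ℝ, 0 ≤ t → t < c → x + t • (y - x) ∈ D := by
  set γ : ℝ → EuclideanSpace ℝ (Fin d) := fun t => x + t • (y - x) with hγ
  have hγc : Continuous γ := by continuity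
  set T : Set ℝ := {t | t ∈ Set.Icc (0:ℝ) 1 ∧ γ t ∉ D} with hT
  have hT1 : (1:ℝ) ∈ T := by
    constructor
    · exact ⟨zero_le_one, le_refl 1⟩
    · simpa [hγ] using hy
  have hTne : T.Nonempty := ⟨1, hT1⟩
  have hTbdd : BddBelow T := ⟨0, fun t ht => ht.1.1⟩
  set c := sInf T with hc
  have hc1 : c ≤ 1 := csInf_le hTbdd hT1
  have hc0' : 0 ≤ c := le_csInf hTne fun t ht => ht.1.1
  have hin : ∀ t : ℝ, 0 ≤ t → t < c → γ t ∈ D := by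
    intro t ht0 htc
    by_contra h
    have htT : t ∈ T := ⟨⟨ht0, le_trans htc.le hc1⟩, h⟩
    exact absurd (csInf_le hTbdd htT) (not_le.2 htc)
  have hc0 : 0 < c := by
    have h0 : γ 0 = x := by simp [hγ]
    have : ∃ ε > 0, ∀ t : ℝ, |t| ≤ ε → γ t ∈ D := by
      have hcont : ContinuousAt γ 0 := hγc.continuousAt
      have : D ∈ nhds (γ 0) := hDo.mem_nhds (by rwa [h0])
      have h2 := hcont.preimage_mem_nhds this
      rcases Metric.mem_nhds_iff.1 h2 with ⟨ε, hε, hball⟩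
      exact ⟨ε/2, by linarith, fun t ht => hball (by
        simp only [Metric.mem_ball, Real.dist_eq, sub_zero]
        have : |t| ≤ ε/2 := ht
        linarith)⟩
    obtain ⟨ε, hε, hball⟩ := this
    have : min ε 1 ≤ c := by
      refine le_csInf hTne fun t ht => ?_
      by_contra hlt
      push_neg at hlt
      have ht0 : 0 ≤ t := ht.1.1
      have : γ t ∈ D := hball t (by
        rw [abs_of_nonneg ht0]
        exact le_trans hlt.le (min_le_left _ _))
      exact ht.2 this
    exact lt_of_lt_of_le (lt_min hε zero_lt_one) this
  have hγcD : γ c ∉ D := by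
    intro h
    have hc1' : c < 1 := by
      rcases lt_or_eq_of_le hc1 with h' | h'
      · exact h'
      · exfalso; rw [h'] at h; exact absurd (by simpa [hγ] using h) hy
    have hcont : ContinuousAt γ c := hγc.continuousAt
    have h2 := hcont.preimage_mem_nhds (hDo.mem_nhds h)
    rcases Metric.mem_nhds_iff.1 h2 with ⟨ε, hε, hball⟩
    obtain ⟨t, htT, htlt⟩ := (csInf_lt_iff hTbdd hTne).1 (show c < c + ε/2 by linarith)
    have hct : c ≤ t := csInf_le hTbdd htT
    have : γ t ∈ D := hball (by
      simp only [Metric.mem_ball, Real.dist_eq]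
      rw [abs_of_nonneg (by linarith)]
      linarith)
    exact htT.2 this
  have hγccl : γ c ∈ closure D := by
    have : Filter.Tendsto (fun n : ℕ => γ (c * (1 - 1/(n+1)))) Filter.atTop (nhds (γ c)) := by
      refine (hγc.continuousAt).tendsto.comp ?_
      have h1 : Filter.Tendsto (fun n : ℕ => 1 - 1/(n+1 : ℝ)) Filter.atTop (nhds 1) := by
        have := tendsto_one_div_add_atTop_nhds_zero_nat (𝕜 := ℝ)
        have h2 := Filter.Tendsto.const_sub (1:ℝ) this
        simpa using h2
      have := h1.const_mul c
      simpa using this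
    refine mem_closure_of_tendsto this ?_
    filter_upwards with n
    have h1 : (1:ℝ)/(n+1) ≤ 1 := by
      rw [div_le_one (by positivity)]; linarith [Nat.cast_nonneg (α := ℝ) n]
    have h2 : (0:ℝ) < 1/(n+1) := by positivity
    exact hin _ (mul_nonneg hc0.le (by linarith)) (by nlinarith)
  exact ⟨c, hc0, hc1, by rw [hDo.frontier_eq]; exact ⟨hγccl, hγcD⟩, hin⟩

/-- Key bound: the displacement at an interior point is controlled by the distance
to any exterior point. -/
private lemma key_bound' {D : Set (EuclideanSpace ℝ (Fin d))} (hDo : IsOpen D)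
    {X : EuclideanSpace ℝ (Fin d) → EuclideanSpace ℝ (Fin d)}
    (hXc : ContinuousOn X (closure D))
    (hdiff : ∀ z ∈ D, HasFDerivAt X (fderiv ℝ X z) z)
    {C : ℝ} (hC : ∀ z ∈ D, ‖fderiv ℝ X z‖ ≤ C)
    (hXbd : ∀ z ∈ frontier D, X z = z)
    {x y : EuclideanSpace ℝ (Fin d)} (hx : x ∈ D) (hy : y ∉ D) :
    ‖X x - x‖ ≤ (C + 1) * ‖y - x‖ := by
  obtain ⟨c, hc0, hc1, hcf, hcin⟩ := seg_exit' hDo hx hy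
  set p := x + c • (y - x) with hpdef
  have hXp : X p = p := hXbd p hcf
  have hpcl : p ∈ closure D := hcf.1
  have hlip : ‖X p - X x‖ ≤ C * ‖p - x‖ := by
    refine seg_lipschitz' hXc hdiff hC hx hpcl fun t ht0 ht1 => ?_
    have : x + t • (p - x) = x + (t * c) • (y - x) := by
      rw [hpdef]; module
    rw [this]
    exact hcin _ (mul_nonneg ht0 hc0.le) (by nlinarith)
  have hpx : ‖p - x‖ ≤ ‖y - x‖ := by
    have : p - x = c • (y - x) := by rw [hpdef]; abel
    rw [this, norm_smul, Real.norm_eq_abs, abs_of_pos hc0]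
    nlinarith [norm_nonneg (y - x)]
  have hCnn : 0 ≤ C := le_trans (norm_nonneg _) (hC x hx)
  calc ‖X x - x‖ = ‖(X x - X p) + (p - x)‖ := by rw [hXp]; congr 1; abel
    _ ≤ ‖X x - X p‖ + ‖p - x‖ := norm_add_le _ _
    _ = ‖X p - X x‖ + ‖p - x‖ := by rw [norm_sub_rev]
    _ ≤ C * ‖p - x‖ + ‖p - x‖ := by linarith
    _ = (C + 1) * ‖p - x‖ := by ring
    _ ≤ (C + 1) * ‖y - x‖ := by nlinarith

/-- Global displacement estimate on the closure. -/
private lemma global_bound' {D : Set (EuclideanSpace ℝ (Fin d))} (hDo : IsOpen D)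
    {X : EuclideanSpace ℝ (Fin d) → EuclideanSpace ℝ (Fin d)}
    (hXc : ContinuousOn X (closure D))
    (hdiff : ∀ z ∈ D, HasFDerivAt X (fderiv ℝ X z) z)
    {C : ℝ} (hCnn : 0 ≤ C) (hC : ∀ z ∈ D, ‖fderiv ℝ X z‖ ≤ C)
    (hXbd : ∀ z ∈ frontier D, X z = z)
    {x y : EuclideanSpace ℝ (Fin d)} (hx : x ∈ closure D) (hy : y ∈ closure D) :
    ‖(X x - x) - (X y - y)‖ ≤ (2 * (C + 1)) * ‖x - y‖ := by
  have hfr : ∀ z, z ∈ closure D → z ∉ D → X z = z := by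
    intro z h1 h2
    exact hXbd z (by rw [hDo.frontier_eq]; exact ⟨h1, h2⟩)
  by_cases hxD : x ∈ D
  · by_cases hyD : y ∈ D
    · by_cases hseg : segment ℝ x y ⊆ D
      · have h1 : ‖X y - X x‖ ≤ C * ‖y - x‖ := by
          refine seg_lipschitz' hXc hdiff hC hxD (subset_closure hyD) fun t ht0 ht1 => ?_
          refine hseg ?_
          rw [segment_eq_image']
          exact ⟨t, ⟨ht0, ht1.le⟩, rfl⟩
        calc ‖(X x - x) - (X y - y)‖ = ‖(X x - X y) - (x - y)‖ := by congr 1; abel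
          _ ≤ ‖X x - X y‖ + ‖x - y‖ := norm_sub_le _ _
          _ = ‖X y - X x‖ + ‖x - y‖ := by rw [norm_sub_rev]
          _ ≤ C * ‖y - x‖ + ‖x - y‖ := by linarith
          _ = (C + 1) * ‖x - y‖ := by rw [norm_sub_rev y x]; ring
          _ ≤ (2 * (C + 1)) * ‖x - y‖ := by nlinarith [norm_nonneg (x - y)]
      · obtain ⟨z, hzseg, hzD⟩ := Set.not_subset.1 hseg
        rw [segment_eq_image'] at hzseg
        obtain ⟨t, ht, rfl⟩ := hzseg
        have hzx : ‖(x + t • (y - x)) - x‖ ≤ ‖x - y‖ := by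
          have he : (x + t • (y - x)) - x = t • (y - x) := by abel
          rw [he, norm_smul, Real.norm_eq_abs, abs_of_nonneg ht.1, norm_sub_rev]
          nlinarith [norm_nonneg (x - y), ht.2]
        have hzy : ‖(x + t • (y - x)) - y‖ ≤ ‖x - y‖ := by
          have he : (x + t • (y - x)) - y = (1 - t) • (x - y) := by module
          rw [he, norm_smul, Real.norm_eq_abs, abs_of_nonneg (by linarith [ht.2])]
          nlinarith [norm_nonneg (x - y), ht.1]
        have h1 : ‖X x - x‖ ≤ (C + 1) * ‖x - y‖ := by
          refine le_trans (key_bound' hDo hXc hdiff hC hXbd hxD hzD) ?_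
          nlinarith
        have h2 : ‖X y - y‖ ≤ (C + 1) * ‖x - y‖ := by
          refine le_trans (key_bound' hDo hXc hdiff hC hXbd hyD hzD) ?_
          nlinarith
        calc ‖(X x - x) - (X y - y)‖ ≤ ‖X x - x‖ + ‖X y - y‖ := norm_sub_le _ _
          _ ≤ (2 * (C + 1)) * ‖x - y‖ := by linarith
    · have h2 : X y = y := hfr y hy hyD
      have h1 : ‖X x - x‖ ≤ (C + 1) * ‖y - x‖ := key_bound' hDo hXc hdiff hC hXbd hxD hyD
      calc ‖(X x - x) - (X y - y)‖ = ‖X x - x‖ := by rw [h2]; simp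
        _ ≤ (C + 1) * ‖y - x‖ := h1
        _ ≤ (2 * (C + 1)) * ‖x - y‖ := by rw [norm_sub_rev y x]; nlinarith [norm_nonneg (x - y)]
  · have h1 : X x = x := hfr x hx hxD
    by_cases hyD : y ∈ D
    · have h2 : ‖X y - y‖ ≤ (C + 1) * ‖x - y‖ := key_bound' hDo hXc hdiff hC hXbd hyD hxD
      calc ‖(X x - x) - (X y - y)‖ = ‖X y - y‖ := by rw [h1]; simp [norm_sub_rev]
        _ ≤ (C + 1) * ‖x - y‖ := h2
        _ ≤ (2 * (C + 1)) * ‖x - y‖ := by nlinarith [norm_nonneg (x - y)]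
    · have h2 : X y = y := hfr y hy hyD
      simp only [h1, h2, sub_self, norm_zero]
      positivity

/-- Small perturbations of the identity are continuous linear equivalences. -/
private noncomputable def pertEquiv' (B : EuclideanSpace ℝ (Fin d) →L[ℝ] EuclideanSpace ℝ (Fin d))
    (s : ℝ) (h : ‖s • B‖ < 1) : EuclideanSpace ℝ (Fin d) ≃L[ℝ] EuclideanSpace ℝ (Fin d) :=
  ContinuousLinearEquiv.ofUnit (Units.oneSub (-(s • B)) (by rwa [norm_neg]))

private lemma pertEquiv_coe' (B : EuclideanSpace ℝ (Fin d) →L[ℝ] EuclideanSpace ℝ (Fin d))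
    (s : ℝ) (h : ‖s • B‖ < 1) :
    (pertEquiv' B s h : EuclideanSpace ℝ (Fin d) →L[ℝ] EuclideanSpace ℝ (Fin d))
      = ContinuousLinearMap.id ℝ (EuclideanSpace ℝ (Fin d)) + s • B := by
  show (1 : EuclideanSpace ℝ (Fin d) →L[ℝ] EuclideanSpace ℝ (Fin d)) - -(s • B) = _
  rw [sub_neg_eq_add, ContinuousLinearMap.one_def]

private lemma pert_det_ne' (B : EuclideanSpace ℝ (Fin d) →L[ℝ] EuclideanSpace ℝ (Fin d))
    (s : ℝ) (h : ‖s • B‖ < 1) :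
    (ContinuousLinearMap.id ℝ (EuclideanSpace ℝ (Fin d)) + s • B).det ≠ 0 := by
  rw [← pertEquiv_coe' B s h]
  exact (LinearEquiv.isUnit_det' (pertEquiv' B s h).toLinearEquiv).ne_zero

private lemma pert_det_pos' (B : EuclideanSpace ℝ (Fin d) →L[ℝ] EuclideanSpace ℝ (Fin d))
    (s : ℝ) (hs : 0 ≤ s) (h : ∀ σ : ℝ, 0 ≤ σ → σ ≤ s → ‖σ • B‖ < 1) :
    0 < (ContinuousLinearMap.id ℝ (EuclideanSpace ℝ (Fin d)) + s • B).det := by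
  set ψ : ℝ → ℝ := fun σ => (ContinuousLinearMap.id ℝ (EuclideanSpace ℝ (Fin d)) + σ • B).det
    with hψ
  have hψc : Continuous ψ := by
    apply ContinuousLinearMap.continuous_det.comp
    exact continuous_const.add (continuous_id.smul continuous_const)
  have hψ0 : ψ 0 = 1 := by
    simp [hψ, ContinuousLinearMap.det, ContinuousLinearMap.one_def]
  by_contra hle
  push_neg at hle
  have : (0:ℝ) ∈ Set.Icc (ψ s) (ψ 0) := ⟨hle, by rw [hψ0]; norm_num⟩
  obtain ⟨σ, hσ, hσ0⟩ := intermediate_value_Icc' hs hψc.continuousOn this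
  exact pert_det_ne' B σ (h σ hσ.1 hσ.2) hσ0

/-- Determinant expansion of `1 + s • N` in powers of `s`. -/
private lemma det_one_add_smul_expand {N : Matrix (Fin d) (Fin d) ℝ} (s : ℝ) :
    (1 + s • N).det = ∑ S : Finset (Fin d), s ^ S.card *
      (Matrix.of fun i j => if i ∈ S then N i j else (1 : Matrix (Fin d) (Fin d) ℝ) i j).det := by
  classical
  set f := (Matrix.detRowAlternating (R := ℝ) (n := Fin d)).toMultilinearMap with hf
  have h1 : (1 + s • N).det
      = f ((fun i => s • N i) + (fun i => (1 : Matrix (Fin d) (Fin d) ℝ) i)) := by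
    show _ = Matrix.detRowAlternating _
    unfold Matrix.det
    congr 1
    ext i j
    simp [Matrix.add_apply, Matrix.smul_apply, add_comm]
  rw [h1, f.map_add_univ]
  refine Finset.sum_congr rfl fun S _ => ?_
  have h2 : S.piecewise (fun i => s • N i) (fun i => (1 : Matrix (Fin d) (Fin d) ℝ) i)
      = fun i => (if i ∈ S then s else 1) •
        (S.piecewise (fun i => N i) (fun i => (1 : Matrix (Fin d) (Fin d) ℝ) i)) i := by
    ext i j
    by_cases h : i ∈ S <;> simp [Finset.piecewise, h]
  rw [h2, f.map_smul_univ]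
  have h3 : (∏ i : Fin d, (if i ∈ S then s else (1:ℝ))) = s ^ S.card := by
    rw [Finset.prod_ite_mem]
    simp [Finset.prod_const, Finset.univ_inter]
  rw [h3, smul_eq_mul]
  congr 1
  show Matrix.detRowAlternating _ = _
  unfold Matrix.det
  congr 1
  ext i j
  by_cases h : i ∈ S <;> simp [Finset.piecewise, h]

/-- Entrywise bound on the determinant. -/
private lemma det_entry_bound {R : ℝ} {M : Matrix (Fin d) (Fin d) ℝ}
    (h : ∀ i j, |M i j| ≤ R) : |M.det| ≤ (Nat.factorial d : ℝ) * R ^ d := by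
  classical
  rw [Matrix.det_apply]
  refine le_trans (Finset.abs_sum_le_sum_abs _ _) ?_
  have hterm : ∀ σ : Equiv.Perm (Fin d),
      |Equiv.Perm.sign σ • ∏ i, M (σ i) i| ≤ R ^ d := by
    intro σ
    have h1 : |Equiv.Perm.sign σ • ∏ i, M (σ i) i| = |∏ i, M (σ i) i| := by
      rcases Int.units_eq_one_or (Equiv.Perm.sign σ) with hs | hs <;>
        simp [hs, Units.smul_def, abs_neg]
    rw [h1, Finset.abs_prod]
    calc (∏ i, |M (σ i) i|) ≤ ∏ _i : Fin d, R :=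
          Finset.prod_le_prod (fun i _ => abs_nonneg _) (fun i _ => h _ _)
      _ = R ^ d := by simp [Finset.prod_const]
  calc (∑ σ : Equiv.Perm (Fin d), |Equiv.Perm.sign σ • ∏ i, M (σ i) i|)
      ≤ ∑ _σ : Equiv.Perm (Fin d), R ^ d := Finset.sum_le_sum fun σ _ => hterm σ
    _ = (Nat.factorial d : ℝ) * R ^ d := by
        rw [Finset.sum_const, Finset.card_univ, Fintype.card_perm, Fintype.card_fin,
          nsmul_eq_mul]

end Aux

set_option maxHeartbeats 1600000 in
/-- Let `D ⊂ ℝ^d` be a bounded open connected set and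
`X : closure D → closure D` continuous, `C¹` on `D` with bounded continuous first
derivatives, `X = id` on `∂D`, `det DX ≥ 0` on `D`, and `X` a local homeomorphism at
every point of `D`.  Then `Vol D = ∫_D det DX(x) dx`. -/
theorem volume_eq_integral_det_jacobian {d : ℕ}
    (D : Set (EuclideanSpace ℝ (Fin d)))
    (hDo : IsOpen D) (hDb : Bornology.IsBounded D) (hDc : IsConnected D)
    (X : EuclideanSpace ℝ (Fin d) → EuclideanSpace ℝ (Fin d))
    (hXc : ContinuousOn X (closure D))
    (hXmaps : Set.MapsTo X (closure D) (closure D))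
    (hX1 : ContDiffOn ℝ 1 X D)
    (hXder : ∃ C : ℝ, ∀ x ∈ D, ‖fderiv ℝ X x‖ ≤ C)
    (hXbd : ∀ x ∈ frontier D, X x = x)
    (hdet : ∀ x ∈ D, 0 ≤ (fderiv ℝ X x).det)
    (hloc : ∀ x₀ ∈ D, ∃ e : PartialHomeomorph (EuclideanSpace ℝ (Fin d))
        (EuclideanSpace ℝ (Fin d)),
        x₀ ∈ e.source ∧ e.source ⊆ D ∧ Set.EqOn X e e.source) :
    volume D = ENNReal.ofReal (∫ x in D, (fderiv ℝ X x).det) := by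
  classical
  have hDne : D.Nonempty := hDc.nonempty
  obtain ⟨C₀, hC₀⟩ := hXder
  set C : ℝ := max C₀ 0 with hCdef
  have hCnn : (0:ℝ) ≤ C := le_max_right _ _
  have hC : ∀ z ∈ D, ‖fderiv ℝ X z‖ ≤ C := fun z hz => le_trans (hC₀ z hz) (le_max_left _ _)
  have hdiff : ∀ z ∈ D, HasFDerivAt X (fderiv ℝ X z) z := fun z hz =>
    ((hX1.contDiffAt (hDo.mem_nhds hz)).differentiableAt one_ne_zero).hasFDerivAt
  have hstrict : ∀ z ∈ D, HasStrictFDerivAt X (fderiv ℝ X z) z := fun z hz =>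
    (hX1.contDiffAt (hDo.mem_nhds hz)).hasStrictFDerivAt one_ne_zero
  set B : EuclideanSpace ℝ (Fin d) →
      (EuclideanSpace ℝ (Fin d) →L[ℝ] EuclideanSpace ℝ (Fin d)) :=
    fun z => fderiv ℝ X z - ContinuousLinearMap.id ℝ (EuclideanSpace ℝ (Fin d)) with hBdef
  have hBn : ∀ z ∈ D, ‖B z‖ ≤ C + 1 := by
    intro z hz
    calc ‖B z‖ ≤ ‖fderiv ℝ X z‖ + ‖ContinuousLinearMap.id ℝ (EuclideanSpace ℝ (Fin d))‖ :=
          norm_sub_le _ _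
      _ ≤ C + 1 := add_le_add (hC z hz) ContinuousLinearMap.norm_id_le
  set g : ℝ → EuclideanSpace ℝ (Fin d) → EuclideanSpace ℝ (Fin d) :=
    fun s z => z + s • (X z - z) with hgdef
  have hgid : ∀ s : ℝ, ∀ z ∈ frontier D, g s z = z := by
    intro s z hz
    show z + s • (X z - z) = z
    rw [hXbd z hz, sub_self, smul_zero, add_zero]
  have hgc : ∀ s : ℝ, ContinuousOn (g s) (closure D) := by
    intro s
    exact continuousOn_id.add ((hXc.sub continuousOn_id).const_smul s)
  have hgstrict : ∀ s : ℝ, ∀ z ∈ D, HasStrictFDerivAt (g s)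
      (ContinuousLinearMap.id ℝ (EuclideanSpace ℝ (Fin d)) + s • B z) z := by
    intro s z hz
    exact (hasStrictFDerivAt_id z).add (((hstrict z hz).sub (hasStrictFDerivAt_id z)).const_smul s)
  have hvolD : volume D ≠ ⊤ := hDb.measure_lt_top.ne
  have hmD : MeasurableSet D := hDo.measurableSet
  have hfcont : ContinuousOn (fun z => fderiv ℝ X z) D :=
    hX1.continuousOn_fderiv_of_isOpen hDo le_rfl
  have hBcont : ContinuousOn B D := hfcont.sub continuousOn_const
  set bb := (EuclideanSpace.basisFun (Fin d) ℝ).toBasis with hbb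
  set matB : EuclideanSpace ℝ (Fin d) → Matrix (Fin d) (Fin d) ℝ :=
    fun z => LinearMap.toMatrix bb bb
      (B z : EuclideanSpace ℝ (Fin d) →ₗ[ℝ] EuclideanSpace ℝ (Fin d)) with hmatB
  have hdetmat : ∀ s : ℝ, ∀ z,
      (ContinuousLinearMap.id ℝ (EuclideanSpace ℝ (Fin d)) + s • B z).det
        = (1 + s • matB z).det := by
    intro s z
    rw [ContinuousLinearMap.det, ← LinearMap.det_toMatrix bb]
    congr 1
    have h1 : ((ContinuousLinearMap.id ℝ (EuclideanSpace ℝ (Fin d)) + s • B z :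
        EuclideanSpace ℝ (Fin d) →L[ℝ] EuclideanSpace ℝ (Fin d)) :
        EuclideanSpace ℝ (Fin d) →ₗ[ℝ] EuclideanSpace ℝ (Fin d))
        = LinearMap.id + s • (B z : EuclideanSpace ℝ (Fin d) →ₗ[ℝ] EuclideanSpace ℝ (Fin d)) := by
      ext v
      simp
    rw [h1, map_add, _root_.map_smul, LinearMap.toMatrix_id, hmatB]
  have hfderiv_eq : ∀ z, (fderiv ℝ X z).det = (1 + (1:ℝ) • matB z).det := by
    intro z
    rw [← hdetmat 1 z]
    congr 1
    ext v
    simp [hBdef]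
  have hmatBent : ∀ z ∈ D, ∀ i j, |matB z i j| ≤ C + 1 := by
    intro z hz i j
    have h1 : matB z i j = (B z (bb j)) i := by
      simp [hmatB, LinearMap.toMatrix_apply, hbb, OrthonormalBasis.coe_toBasis_repr_apply,
        EuclideanSpace.basisFun_repr]
    rw [h1]
    refine le_trans (coord_abs_le_norm' _ _) ?_
    have h2 : ‖(bb j : EuclideanSpace ℝ (Fin d))‖ = 1 := by
      rw [hbb]
      simp [OrthonormalBasis.coe_toBasis, EuclideanSpace.basisFun_apply,
        EuclideanSpace.norm_single]
    calc ‖B z (bb j)‖ ≤ ‖B z‖ * ‖(bb j : EuclideanSpace ℝ (Fin d))‖ :=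
          (B z).le_opNorm _
      _ ≤ C + 1 := by rw [h2, mul_one]; exact hBn z hz
  set DS : Finset (Fin d) → Matrix (Fin d) (Fin d) ℝ → ℝ := fun S N =>
    (Matrix.of fun i j => if i ∈ S then N i j else (1 : Matrix (Fin d) (Fin d) ℝ) i j).det
    with hDS
  have hDScont : ∀ S, Continuous (DS S) := by
    intro S
    apply Continuous.matrix_det
    apply continuous_matrix
    intro i j
    by_cases h : i ∈ S
    · simpa [h] using (continuous_id (X := Matrix (Fin d) (Fin d) ℝ)).matrix_elem i j
    · simpa [h] using continuous_const
  have hmatBcont : ContinuousOn matB D := by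
    refine continuousOn_pi.2 ?_
    intro i
    rw [continuousOn_pi]
    intro j
    have h1 : ∀ z, matB z i j = (EuclideanSpace.proj i) ((ContinuousLinearMap.apply ℝ
        (EuclideanSpace ℝ (Fin d)) (bb j)) (B z)) := by
      intro z
      simp [hmatB, LinearMap.toMatrix_apply, hbb, OrthonormalBasis.coe_toBasis_repr_apply,
        EuclideanSpace.basisFun_repr]
    simp only [h1]
    exact ((EuclideanSpace.proj i).continuous.comp
      (ContinuousLinearMap.apply ℝ (EuclideanSpace ℝ (Fin d)) (bb j)).continuous).comp_continuousOn
      hBcont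
  have hintS : ∀ S : Finset (Fin d), IntegrableOn (fun z => DS S (matB z)) D volume := by
    intro S
    have haesm : AEStronglyMeasurable (fun z => DS S (matB z)) (volume.restrict D) :=
      ((hDScont S).comp_continuousOn hmatBcont).aestronglyMeasurable hmD
    refine ⟨haesm, ?_⟩
    refine HasFiniteIntegral.restrict_of_bounded
      (C := (Nat.factorial d : ℝ) * (max 1 (C+1)) ^ d) hvolD.lt_top ?_
    rw [ae_restrict_iff' hmD]
    filter_upwards with z hz
    rw [Real.norm_eq_abs]
    refine det_entry_bound fun i j => ?_
    by_cases h : i ∈ S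
    · simp only [Matrix.of_apply, h, if_true]
      exact le_trans (hmatBent z hz i j) (le_max_right _ _)
    · simp only [Matrix.of_apply, h, if_false]
      rcases eq_or_ne i j with rfl | hij
      · simp [Matrix.one_apply]
      · simp [Matrix.one_apply, hij]
  set aS : Finset (Fin d) → ℝ := fun S => ∫ z in D, DS S (matB z) with haS
  have hswap : ∀ s : ℝ, (∫ z in D, (1 + s • matB z).det)
      = ∑ S : Finset (Fin d), s ^ S.card * aS S := by
    intro s
    have h1 : ∀ z, (1 + s • matB z).det = ∑ S : Finset (Fin d), s ^ S.card * DS S (matB z) :=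
      fun z => det_one_add_smul_expand s
    calc (∫ z in D, (1 + s • matB z).det)
        = ∫ z in D, ∑ S : Finset (Fin d), s ^ S.card * DS S (matB z) := by
          simp_rw [h1]
      _ = ∑ S : Finset (Fin d), ∫ z in D, s ^ S.card * DS S (matB z) :=
          integral_finset_sum _ (fun S _ => ((hintS S).const_mul _))
      _ = ∑ S : Finset (Fin d), s ^ S.card * aS S := by
          refine Finset.sum_congr rfl fun S _ => ?_
          rw [integral_const_mul]
  have main : ∀ s : ℝ, s ∈ Set.Ioo (0:ℝ) (1/(2*(C+1))) →
      (∫ z in D, (1 + s • matB z).det) = (volume D).toReal := by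
    intro s hs
    obtain ⟨hs0, hs1⟩ := hs
    have hCpos : (0:ℝ) < C + 1 := by linarith
    have hsK : s * (C+1) < 1/2 := by
      rw [lt_div_iff₀ (by positivity : (0:ℝ) < 2*(C+1))] at hs1
      nlinarith
    have hsmall : ∀ z ∈ D, ‖s • B z‖ < 1 := by
      intro z hz
      have h8 : ‖s • B z‖ = ‖s‖ * ‖B z‖ := norm_smul s (B z)
      rw [h8, Real.norm_eq_abs, abs_of_pos hs0]
      nlinarith [hBn z hz, norm_nonneg (B z)]
    have hinj : Set.InjOn (g s) (closure D) := by
      intro x hx y hy hxy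
      by_contra hne
      have h1 : x - y = s • ((X y - y) - (X x - x)) := by
        have h3 : x - y - s • ((X y - y) - (X x - x))
            = (x + s • (X x - x)) - (y + s • (X y - y)) := by module
        have h4 : x - y - s • ((X y - y) - (X x - x)) = 0 := by
          rw [h3]
          rw [show (x + s • (X x - x)) = g s x from rfl, show (y + s • (X y - y)) = g s y from rfl,
            hxy, sub_self]
        exact sub_eq_zero.1 h4
      have hEb : ‖(X x - x) - (X y - y)‖ ≤ (2*(C+1)) * ‖x - y‖ :=
        global_bound' hDo hXc hdiff hCnn hC hXbd hx hy
      have h7 : ‖x - y‖ = s * ‖(X x - x) - (X y - y)‖ := by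
        have h8 : ‖s • ((X y - y) - (X x - x))‖ = ‖s‖ * ‖(X y - y) - (X x - x)‖ :=
          norm_smul s _
        rw [h1, h8, Real.norm_eq_abs, abs_of_pos hs0, norm_sub_rev]
      have hpos : 0 < ‖x - y‖ := by
        rw [norm_pos_iff, sub_ne_zero]
        exact hne
      set n := ‖x - y‖ with hn
      set m := ‖(X x - x) - (X y - y)‖ with hm
      clear_value n m
      have h10 : s * m ≤ s * ((2*(C+1)) * n) := mul_le_mul_of_nonneg_left hEb hs0.le
      have h12 := mul_lt_mul_of_pos_right hsK hpos
      linarith [h7, h10, h12]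
    have hsub : g s '' D ⊆ D := by
      rintro _ ⟨x, hx, rfl⟩
      by_contra hout
      have hE0 : X x - x ≠ 0 := by
        intro h0
        have h9 : g s x = x := by
          show x + s • (X x - x) = x
          rw [h0, smul_zero, add_zero]
        rw [h9] at hout
        exact hout hx
      have hkb : ‖X x - x‖ ≤ (C+1) * ‖g s x - x‖ :=
        key_bound' hDo hXc hdiff hC hXbd hx hout
      have h6 : ‖g s x - x‖ = s * ‖X x - x‖ := by
        have h9 : g s x - x = s • (X x - x) := by
          show (x + s • (X x - x)) - x = s • (X x - x)
          abel
        have h8 : ‖s • (X x - x)‖ = ‖s‖ * ‖X x - x‖ := norm_smul s _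
        rw [h9, h8, Real.norm_eq_abs, abs_of_pos hs0]
      have hp : 0 < ‖X x - x‖ := norm_pos_iff.2 hE0
      rw [h6] at hkb
      set m := ‖X x - x‖ with hm
      clear_value m
      have h13 := mul_lt_mul_of_pos_right hsK hp
      linarith [hkb, hp, h13]
    have hopen : IsOpen (g s '' D) := by
      rw [isOpen_iff_mem_nhds]
      rintro _ ⟨x, hx, rfl⟩
      have he : HasStrictFDerivAt (g s)
          ((pertEquiv' (B x) s (hsmall x hx) :
            EuclideanSpace ℝ (Fin d) ≃L[ℝ] EuclideanSpace ℝ (Fin d)) :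
            EuclideanSpace ℝ (Fin d) →L[ℝ] EuclideanSpace ℝ (Fin d)) x := by
        rw [pertEquiv_coe']
        exact hgstrict s x hx
      rw [← he.map_nhds_eq_of_equiv]
      exact Filter.image_mem_map (hDo.mem_nhds hx)
    have hclosed : D ∩ closure (g s '' D) ⊆ g s '' D := by
      intro y hy
      have h1 : closure (g s '' D) ⊆ g s '' closure D := by
        have hcomp : IsCompact (g s '' closure D) :=
          (hDb.isCompact_closure).image_of_continuousOn (hgc s)
        exact closure_minimal (Set.image_mono subset_closure) hcomp.isClosed
      obtain ⟨x, hx, hgx⟩ := h1 hy.2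
      by_cases hxD : x ∈ D
      · exact ⟨x, hxD, hgx⟩
      · exfalso
        have hxf : x ∈ frontier D := by rw [hDo.frontier_eq]; exact ⟨hx, hxD⟩
        have h2 : g s x = x := hgid s x hxf
        rw [h2] at hgx
        rw [hgx] at hxD
        exact hxD hy.1
    have himg : g s '' D = D := by
      refine Set.Subset.antisymm hsub ?_
      by_contra hne
      obtain ⟨y0, hy0D, hy0n⟩ := Set.not_subset.1 hne
      have hDcover : D ⊆ (g s '' D) ∪ (closure (g s '' D))ᶜ := by
        intro z hz
        by_cases h : z ∈ closure (g s '' D)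
        · exact Or.inl (hclosed ⟨hz, h⟩)
        · exact Or.inr h
      have hne1 : (D ∩ (g s '' D)).Nonempty := by
        obtain ⟨x, hx⟩ := hDne
        exact ⟨g s x, hsub ⟨x, hx, rfl⟩, ⟨x, hx, rfl⟩⟩
      have hne2 : (D ∩ (closure (g s '' D))ᶜ).Nonempty :=
        ⟨y0, hy0D, fun hc => hy0n (hclosed ⟨hy0D, hc⟩)⟩
      obtain ⟨z, hz⟩ := hDc.isPreconnected _ _ hopen (isOpen_compl_iff.2 isClosed_closure)
        hDcover hne1 hne2
      exact hz.2.2 (subset_closure hz.2.1)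
    have hcv : (∫⁻ z in D, ENNReal.ofReal
        |(ContinuousLinearMap.id ℝ (EuclideanSpace ℝ (Fin d)) + s • B z).det|) = volume D := by
      have h1 := lintegral_abs_det_fderiv_eq_addHaar_image volume hmD
        (f := g s) (f' := fun z => ContinuousLinearMap.id ℝ (EuclideanSpace ℝ (Fin d)) + s • B z)
        (fun z hz => ((hgstrict s z hz).hasFDerivAt).hasFDerivWithinAt)
        (hinj.mono subset_closure)
      rw [h1, himg]
    have hdetpos : ∀ z ∈ D,
        0 < (ContinuousLinearMap.id ℝ (EuclideanSpace ℝ (Fin d)) + s • B z).det := by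
      intro z hz
      refine pert_det_pos' (B z) s hs0.le fun σ hσ0 hσs => ?_
      have h8 : ‖σ • B z‖ = ‖σ‖ * ‖B z‖ := norm_smul σ (B z)
      rw [h8, Real.norm_eq_abs, abs_of_nonneg hσ0]
      nlinarith [hBn z hz, norm_nonneg (B z)]
    have hcont2 : ContinuousOn
        (fun z => (ContinuousLinearMap.id ℝ (EuclideanSpace ℝ (Fin d)) + s • B z).det) D :=
      ContinuousLinearMap.continuous_det.comp_continuousOn
        (continuousOn_const.add (hBcont.const_smul s))
    have haesm : AEStronglyMeasurable
        (fun z => (ContinuousLinearMap.id ℝ (EuclideanSpace ℝ (Fin d)) + s • B z).det)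
        (volume.restrict D) := hcont2.aestronglyMeasurable hmD
    have hae_nonneg : 0 ≤ᵐ[volume.restrict D]
        fun z => (ContinuousLinearMap.id ℝ (EuclideanSpace ℝ (Fin d)) + s • B z).det := by
      refine (ae_restrict_iff' hmD).2 ?_
      filter_upwards with z hz
      exact (hdetpos z hz).le
    have hreal : (∫ z in D, (ContinuousLinearMap.id ℝ (EuclideanSpace ℝ (Fin d)) + s • B z).det)
        = (volume D).toReal := by
      rw [integral_eq_lintegral_of_nonneg_ae hae_nonneg haesm]
      congr 1
      rw [← hcv]
      refine setLIntegral_congr_fun hmD ?_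
      intro z hz
      dsimp only
      rw [abs_of_pos (hdetpos z hz)]
    rw [← hreal]
    refine integral_congr_ae ((ae_restrict_iff' hmD).2 ?_)
    filter_upwards with z hz
    exact (hdetmat s z).symm
  set vol := (volume D).toReal with hvol
  set P : Polynomial ℝ :=
    (∑ S : Finset (Fin d), Polynomial.C (aS S) * Polynomial.X ^ S.card) - Polynomial.C vol
    with hP
  have hPeval : ∀ s : ℝ, P.eval s = (∑ S : Finset (Fin d), s ^ S.card * aS S) - vol := by
    intro s
    rw [hP, Polynomial.eval_sub, Polynomial.eval_C, Polynomial.eval_finset_sum]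
    congr 1
    refine Finset.sum_congr rfl fun S _ => ?_
    rw [Polynomial.eval_mul, Polynomial.eval_C, Polynomial.eval_pow, Polynomial.eval_X, mul_comm]
  have hProots : ∀ s ∈ Set.Ioo (0:ℝ) (1/(2*(C+1))), P.IsRoot s := by
    intro s hs
    rw [Polynomial.IsRoot, hPeval, ← hswap s, main s hs, hvol, sub_self]
  have hPzero : P = 0 := by
    refine Polynomial.eq_zero_of_infinite_isRoot _ ?_
    refine Set.Infinite.mono (fun s hs => hProots s hs) ?_
    exact Set.Ioo_infinite (show (0:ℝ) < 1/(2*(C+1)) by positivity)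
  have heval1 : (∑ S : Finset (Fin d), (1:ℝ) ^ S.card * aS S) = vol := by
    have h1 := hPeval 1
    rw [hPzero] at h1
    simp only [Polynomial.eval_zero] at h1
    linarith [h1]
  have hfinal : (∫ z in D, (fderiv ℝ X z).det) = vol := by
    have h1 : (∫ z in D, (fderiv ℝ X z).det) = ∫ z in D, (1 + (1:ℝ) • matB z).det := by
      refine integral_congr_ae (Filter.Eventually.of_forall fun z => hfderiv_eq z)
    rw [h1, hswap 1, heval1]
  rw [hfinal, hvol, ENNReal.ofReal_toReal hvolD]
end

section
/- Let D be a bounded open set in ℝ^d and X : closure(D) → ℝ^d continuous, C¹ on D, with sup_{x∈D} ‖DX(x)‖ ≤ N₀ and X(x) = x for all x ∈ ∂D. Then X is Lipschitz continuous on closure(D) with Lipschitz constant at most N₀ + 1. -/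
open MeasureTheory Filter Topology

set_option maxHeartbeats 1000000

private lemma seg_aux {d : ℕ} {D : Set (EuclideanSpace ℝ (Fin d))}
    {X : EuclideanSpace ℝ (Fin d) → EuclideanSpace ℝ (Fin d)} {N₀ : NNReal}
    (hXc : ContinuousOn X (closure D))
    (hX1 : ∀ x ∈ D, DifferentiableAt ℝ X x)
    (hXd : ∀ x ∈ D, ‖fderiv ℝ X x‖ ≤ (N₀ : ℝ))
    {x p : EuclideanSpace ℝ (Fin d)} (hx : x ∈ D) (hp : p ∈ closure D)
    (hseg : segment ℝ x p \ {p} ⊆ D) :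
    ‖X p - X x‖ ≤ (N₀ : ℝ) * ‖p - x‖ := by
  set γ : ℝ → EuclideanSpace ℝ (Fin d) := fun t => x + t • (p - x) with hγ
  have hγc : Continuous γ := continuous_const.add (continuous_id.smul continuous_const)
  have hγ1 : γ 1 = p := by simp [hγ]
  have hmem : ∀ t ∈ Set.Ico (0:ℝ) 1, γ t ∈ D := by
    intro t ht
    rcases eq_or_ne x p with rfl | hne
    · simpa [hγ] using hx
    apply hseg
    constructor
    · rw [segment_eq_image']
      exact ⟨t, Set.Ico_subset_Icc_self ht, rfl⟩
    · simp only [Set.mem_singleton_iff, hγ]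
      intro h
      have : (t - 1) • (p - x) = 0 := by
        linear_combination (norm := module) h
      rcases smul_eq_zero.1 this with h1 | h2
      · have : t = 1 := by linarith [sub_eq_zero.1 h1]
        exact absurd this (ne_of_lt ht.2)
      · exact hne (by rwa [sub_eq_zero, eq_comm] at h2)
  -- for each t < 1, MVT on the segment from x to γ t
  have hMVT : ∀ t ∈ Set.Ico (0:ℝ) 1, ‖X (γ t) - X x‖ ≤ (N₀ : ℝ) * ‖γ t - x‖ := by
    intro t ht
    have hsub : segment ℝ x (γ t) ⊆ D := by
      intro z hz
      rw [segment_eq_image'] at hz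
      obtain ⟨s, hs, rfl⟩ := hz
      have heq2 : x + s • (γ t - x) = γ (s * t) := by
        simp only [hγ, add_sub_cancel_left, smul_smul]
      beta_reduce
      rw [heq2]
      exact hmem _ ⟨mul_nonneg hs.1 ht.1, lt_of_le_of_lt
        (mul_le_of_le_one_left ht.1 hs.2) ht.2⟩
    exact (convex_segment x (γ t)).norm_image_sub_le_of_norm_fderiv_le
      (fun z hz => hX1 z (hsub hz)) (fun z hz => hXd z (hsub hz))
      (left_mem_segment ℝ x (γ t)) (right_mem_segment ℝ x (γ t))
  -- take the limit t → 1⁻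
  have hne : (𝓝[<] (1:ℝ)).NeBot := nhdsLT_neBot_of_exists_lt ⟨0, one_pos⟩
  have hev : ∀ᶠ t in 𝓝[<] (1:ℝ), t ∈ Set.Ico (0:ℝ) 1 :=
    Ico_mem_nhdsLT_of_mem (by constructor <;> norm_num)
  have htend₀ : Tendsto γ (𝓝[<] (1:ℝ)) (𝓝 p) := by
    rw [← hγ1]
    exact (hγc.tendsto 1).mono_left nhdsWithin_le_nhds
  have htendX : Tendsto (fun t => X (γ t)) (𝓝[<] (1:ℝ)) (𝓝 (X p)) := by
    apply (hXc p hp).tendsto.comp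
    rw [tendsto_nhdsWithin_iff]
    exact ⟨htend₀, hev.mono fun t ht => subset_closure (hmem t ht)⟩
  have h1 : Tendsto (fun t => ‖X (γ t) - X x‖) (𝓝[<] (1:ℝ)) (𝓝 ‖X p - X x‖) :=
    (htendX.sub tendsto_const_nhds).norm
  have h2 : Tendsto (fun t => (N₀:ℝ) * ‖γ t - x‖) (𝓝[<] (1:ℝ)) (𝓝 ((N₀:ℝ) * ‖p - x‖)) :=
    ((htend₀.sub tendsto_const_nhds).norm).const_mul _
  exact le_of_tendsto_of_tendsto h1 h2 (hev.mono fun t ht => hMVT t ht)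

/-- If `D ⊂ ℝ^d` is bounded and open, `X : closure D → ℝ^d` is continuous,
`C¹` on `D` with `‖DX‖ ≤ N₀` on `D`, and `X x = x` on `∂D`, then `X` is Lipschitz
continuous on `closure D` with Lipschitz constant at most `N₀ + 1`. -/
theorem lipschitz_of_bounded_deriv_and_identity_on_boundary {d : ℕ}
    (D : Set (EuclideanSpace ℝ (Fin d))) (hD : IsOpen D) (hDb : Bornology.IsBounded D)
    (X : EuclideanSpace ℝ (Fin d) → EuclideanSpace ℝ (Fin d)) (N₀ : NNReal)
    (hXc : ContinuousOn X (closure D))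
    (hX1 : ∀ x ∈ D, DifferentiableAt ℝ X x)
    (hXd : ∀ x ∈ D, ‖fderiv ℝ X x‖ ≤ (N₀ : ℝ))
    (hXb : ∀ x ∈ frontier D, X x = x) :
    LipschitzOnWith (N₀ + 1) X (closure D) := by
  set K : ℝ := (N₀ : ℝ) + 1 with hK
  have hK0 : (0:ℝ) ≤ K := by positivity
  -- key estimate on D
  have key : ∀ x ∈ D, ∀ y ∈ D, ‖X y - X x‖ ≤ K * ‖y - x‖ := by
    intro x hx y hy
    set γ : ℝ → EuclideanSpace ℝ (Fin d) := fun t => x + t • (y - x) with hγ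
    have hγ0 : γ 0 = x := by simp [hγ]
    have hγ1 : γ 1 = y := by simp [hγ]
    set S : Set ℝ := {t ∈ Set.Icc (0:ℝ) 1 | γ t ∉ D} with hS
    rcases Set.eq_empty_or_nonempty S with hSe | hSne
    · -- segment entirely in D
      have hseg : segment ℝ x y \ {y} ⊆ D := by
        intro z hz
        rw [segment_eq_image'] at hz
        obtain ⟨⟨t, ht, rfl⟩, -⟩ := hz
        by_contra hzD
        exact Set.eq_empty_iff_forall_notMem.1 hSe t ⟨ht, hzD⟩
      have := seg_aux hXc hX1 hXd hx (subset_closure hy) hseg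
      calc ‖X y - X x‖ ≤ (N₀:ℝ) * ‖y - x‖ := this
        _ ≤ K * ‖y - x‖ := by
            apply mul_le_mul_of_nonneg_right _ (norm_nonneg _)
            simp [hK]
    · have hScl : IsClosed S := by
        have : S = Set.Icc (0:ℝ) 1 ∩ γ ⁻¹' Dᶜ := rfl
        rw [this]
        exact isClosed_Icc.inter (hD.isClosed_compl.preimage
          (continuous_const.add (continuous_id.smul continuous_const)))
      have hSbdd : BddBelow S := ⟨0, fun t ht => ht.1.1⟩
      have hSbdd' : BddAbove S := ⟨1, fun t ht => ht.1.2⟩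
      set t₁ : ℝ := sInf S with ht₁
      set t₂ : ℝ := sSup S with ht₂
      have ht₁S : t₁ ∈ S := hScl.csInf_mem hSne hSbdd
      have ht₂S : t₂ ∈ S := hScl.csSup_mem hSne hSbdd'
      have ht₁0 : 0 < t₁ := by
        rcases lt_or_eq_of_le ht₁S.1.1 with h | h
        · exact h
        · exact absurd (h ▸ ht₁S).2 (not_not_intro (hγ0 ▸ hx))
      have ht₂1 : t₂ < 1 := by
        rcases lt_or_eq_of_le ht₂S.1.2 with h | h
        · exact h
        · exact absurd (h ▸ ht₂S).2 (not_not_intro (hγ1 ▸ hy))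
      have ht₁₂ : t₁ ≤ t₂ := csInf_le_csSup hSne hSbdd hSbdd'
      -- points strictly before t₁ or strictly after t₂ are in D
      have hA : ∀ u ∈ Set.Ico (0:ℝ) t₁, γ u ∈ D := by
        intro u hu
        by_contra h
        exact absurd (csInf_le hSbdd ⟨⟨hu.1, le_trans hu.2.le (le_trans ht₁₂ ht₂S.1.2)⟩, h⟩)
          (not_le.2 hu.2)
      have hA' : ∀ u ∈ Set.Ioc t₂ (1:ℝ), γ u ∈ D := by
        intro u hu
        by_contra h
        exact absurd (le_csSup hSbdd' ⟨⟨le_trans (le_trans ht₁S.1.1 ht₁₂) hu.1.le, hu.2⟩, h⟩)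
          (not_le.2 hu.1)
      set p := γ t₁ with hp
      set q := γ t₂ with hq
      have hγc : Continuous γ := continuous_const.add (continuous_id.smul continuous_const)
      -- p, q ∈ closure D
      have hpcl : p ∈ closure D := by
        have : t₁ ∈ closure (Set.Ico (0:ℝ) t₁) := by
          rw [closure_Ico (ne_of_lt ht₁0)]
          exact ⟨ht₁0.le, le_refl _⟩
        have := (hγc.continuousWithinAt (s := Set.Ico 0 t₁) (x := t₁)).mem_closure_image this
        exact closure_mono (Set.image_subset_iff.2 hA) this
      have hqcl : q ∈ closure D := by
        have : t₂ ∈ closure (Set.Ioc t₂ (1:ℝ)) := by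
          rw [closure_Ioc (ne_of_lt ht₂1)]
          exact ⟨le_refl _, ht₂1.le⟩
        have := (hγc.continuousWithinAt (s := Set.Ioc t₂ 1) (x := t₂)).mem_closure_image this
        exact closure_mono (Set.image_subset_iff.2 hA') this
      -- p, q on the frontier, hence fixed by X
      have hXp : X p = p := hXb p ⟨hpcl, by rw [hD.interior_eq]; exact ht₁S.2⟩
      have hXq : X q = q := hXb q ⟨hqcl, by rw [hD.interior_eq]; exact ht₂S.2⟩
      -- estimates on both end pieces
      have hseg1 : segment ℝ x p \ {p} ⊆ D := by
        intro z hz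
        obtain ⟨hz1, hz2⟩ := hz
        rw [segment_eq_image'] at hz1
        obtain ⟨s, hs, rfl⟩ := hz1
        have heq : x + s • (p - x) = γ (s * t₁) := by
          simp only [hγ, hp, add_sub_cancel_left, smul_smul]
        beta_reduce at hz2 ⊢
        rw [heq] at hz2 ⊢
        rcases lt_or_eq_of_le (mul_le_of_le_one_left ht₁0.le hs.2) with h | h
        · exact hA _ ⟨mul_nonneg hs.1 ht₁0.le, h⟩
        · exact absurd (by rw [h]; exact Set.mem_singleton _) hz2
      have hseg2 : segment ℝ y q \ {q} ⊆ D := by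
        intro z hz
        obtain ⟨hz1, hz2⟩ := hz
        rw [segment_eq_image'] at hz1
        obtain ⟨s, hs, rfl⟩ := hz1
        have heq : y + s • (q - y) = γ (1 + s * (t₂ - 1)) := by
          simp only [hγ, hq]
          module
        beta_reduce at hz2 ⊢
        rw [heq] at hz2 ⊢
        have hle : t₂ ≤ 1 + s * (t₂ - 1) := by nlinarith [hs.1, hs.2]
        rcases lt_or_eq_of_le hle with h | h
        · exact hA' _ ⟨h, by nlinarith [hs.1, hs.2]⟩
        · exact absurd (by rw [← h]; exact Set.mem_singleton _) hz2
      have e1 : ‖X p - X x‖ ≤ (N₀:ℝ) * ‖p - x‖ := seg_aux hXc hX1 hXd hx hpcl hseg1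
      have e2 : ‖X q - X y‖ ≤ (N₀:ℝ) * ‖q - y‖ := seg_aux hXc hX1 hXd hy hqcl hseg2
      -- norm computations
      set L : ℝ := ‖y - x‖ with hL
      have hnp : ‖p - x‖ = t₁ * L := by
        have : p - x = t₁ • (y - x) := by simp only [hp, hγ]; module
        rw [this, norm_smul, Real.norm_eq_abs, abs_of_pos ht₁0]
      have hnq : ‖q - y‖ = (1 - t₂) * L := by
        have : q - y = (t₂ - 1) • (y - x) := by
          simp only [hq, hγ]
          module
        rw [this, norm_smul, Real.norm_eq_abs, abs_of_neg (by linarith), hL]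
        ring
      have hnpq : ‖q - p‖ = (t₂ - t₁) * L := by
        have : q - p = (t₂ - t₁) • (y - x) := by
          simp only [hq, hp, hγ]
          module
        rw [this, norm_smul, Real.norm_eq_abs, abs_of_nonneg (by linarith)]
      have hL0 : 0 ≤ L := norm_nonneg _
      have hN0 : (0:ℝ) ≤ N₀ := N₀.coe_nonneg
      calc ‖X y - X x‖ = ‖(X y - X q) + (q - p) + (X p - X x)‖ := by
              rw [hXp, hXq]; abel_nf
        _ ≤ ‖X y - X q‖ + ‖q - p‖ + ‖X p - X x‖ :=
              le_trans (norm_add_le _ _) (add_le_add_left (norm_add_le _ _) _)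
        _ ≤ (N₀:ℝ) * ((1 - t₂) * L) + (t₂ - t₁) * L + (N₀:ℝ) * (t₁ * L) := by
              rw [← hnq, ← hnpq, ← hnp]
              have e2' : ‖X y - X q‖ ≤ (N₀:ℝ) * ‖q - y‖ := by
                rw [norm_sub_rev]; exact e2
              exact add_le_add (add_le_add e2' le_rfl) e1
        _ ≤ K * L := by
              rw [hK]
              nlinarith [mul_nonneg (mul_nonneg hN0 hL0) (sub_nonneg.2 ht₁₂),
                mul_nonneg hL0 (show (0:ℝ) ≤ 1 - (t₂ - t₁) by linarith)]
  -- extend to the closure by continuity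
  have key2 : ∀ x ∈ closure D, ∀ y ∈ D, ‖X y - X x‖ ≤ K * ‖y - x‖ := by
    intro x hx y hy
    have hne : (𝓝[D] x).NeBot := mem_closure_iff_nhdsWithin_neBot.1 hx
    have hXt : Tendsto X (𝓝[D] x) (𝓝 (X x)) :=
      (hXc x hx).tendsto.mono_left (nhdsWithin_mono x subset_closure)
    have h1 : Tendsto (fun z => ‖X y - X z‖) (𝓝[D] x) (𝓝 ‖X y - X x‖) :=
      (tendsto_const_nhds.sub hXt).norm
    have h2 : Tendsto (fun z => K * ‖y - z‖) (𝓝[D] x) (𝓝 (K * ‖y - x‖)) :=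
      ((tendsto_const_nhds.sub (tendsto_id.mono_left nhdsWithin_le_nhds)).norm).const_mul _
    refine le_of_tendsto_of_tendsto h1 h2 ?_
    filter_upwards [self_mem_nhdsWithin] with z hz
    exact key z hz y hy
  have key3 : ∀ x ∈ closure D, ∀ y ∈ closure D, ‖X y - X x‖ ≤ K * ‖y - x‖ := by
    intro x hx y hy
    have hne : (𝓝[D] y).NeBot := mem_closure_iff_nhdsWithin_neBot.1 hy
    have hXt : Tendsto X (𝓝[D] y) (𝓝 (X y)) :=
      (hXc y hy).tendsto.mono_left (nhdsWithin_mono y subset_closure)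
    have h1 : Tendsto (fun z => ‖X z - X x‖) (𝓝[D] y) (𝓝 ‖X y - X x‖) :=
      (hXt.sub tendsto_const_nhds).norm
    have h2 : Tendsto (fun z => K * ‖z - x‖) (𝓝[D] y) (𝓝 (K * ‖y - x‖)) :=
      (((tendsto_id.mono_left nhdsWithin_le_nhds).sub tendsto_const_nhds).norm).const_mul _
    refine le_of_tendsto_of_tendsto h1 h2 ?_
    filter_upwards [self_mem_nhdsWithin] with z hz
    exact key2 x hx z hz
  apply LipschitzOnWith.of_dist_le_mul
  intro x hx y hy
  rw [dist_eq_norm, dist_eq_norm]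
  have := key3 y hy x hx
  calc ‖X x - X y‖ ≤ K * ‖x - y‖ := this
    _ = ((N₀ + 1 : NNReal) : ℝ) * ‖x - y‖ := by push_cast [hK]; ring
end

section
/- Let X : ℝ^d → ℝ^d be a C¹ map such that |DX(x)ξ| ≥ δ|ξ| for some δ > 0, all x ∈ ℝ^d and all ξ ∈ ℝ^d, and suppose X(x) = x for |x| ≥ R. Then X is one-to-one and onto ℝ^d. -/
open Filter Set Topology Metric Bornology

/-- If `X : ℝ^d → ℝ^d` is `C¹`, `|DX(x)ξ| ≥ δ|ξ|` for some `δ > 0` and all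
`x, ξ`, and `X x = x` for `|x| ≥ R`, then `X` is one-to-one and onto `ℝ^d`. -/
theorem bijective_of_nondegenerate_jacobian_identity_outside_ball {d : ℕ}
    (X : EuclideanSpace ℝ (Fin d) → EuclideanSpace ℝ (Fin d)) (δ R : ℝ)
    (hδ : 0 < δ) (hR : 0 < R)
    (hX : ContDiff ℝ 1 X)
    (hlow : ∀ x ξ, δ * ‖ξ‖ ≤ ‖fderiv ℝ X x ξ‖)
    (hid : ∀ x, R ≤ ‖x‖ → X x = x) :
    Function.Bijective X := by
  rcases subsingleton_or_nontrivial (EuclideanSpace ℝ (Fin d)) with hs | hnt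
  · exact ⟨fun a b _ => Subsingleton.elim a b, fun y => ⟨y, Subsingleton.elim _ _⟩⟩
  have hcont : Continuous X := hX.continuous
  -- local homeomorphism facts from the inverse function theorem
  have key : ∀ x, Filter.map X (𝓝 x) = 𝓝 (X x) ∧ ∃ s ∈ 𝓝 x, Set.InjOn X s := by
    intro x
    have hd : HasStrictFDerivAt X (fderiv ℝ X x) x := hX.hasStrictFDerivAt one_ne_zero
    have hinj : Function.Injective (fderiv ℝ X x) := by
      intro ξ η h
      have h1 := hlow x (ξ - η)
      rw [map_sub, h, sub_self, norm_zero] at h1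
      have h2 : ‖ξ - η‖ ≤ 0 := by nlinarith [norm_nonneg (ξ - η)]
      exact sub_eq_zero.mp (norm_le_zero_iff.mp h2)
    have hsurj : Function.Surjective ((fderiv ℝ X x).toLinearMap) :=
      LinearMap.injective_iff_surjective.mp hinj
    let e := (LinearEquiv.ofBijective (fderiv ℝ X x).toLinearMap
        ⟨hinj, hsurj⟩).toContinuousLinearEquiv
    have he : (e : EuclideanSpace ℝ (Fin d) →L[ℝ] EuclideanSpace ℝ (Fin d))
        = fderiv ℝ X x := by ext ξ; rfl
    have hd' : HasStrictFDerivAt X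
        (e : EuclideanSpace ℝ (Fin d) →L[ℝ] EuclideanSpace ℝ (Fin d)) x := by
      rw [he]; exact hd
    refine ⟨hd'.map_nhds_eq_of_equiv, (hd'.toOpenPartialHomeomorph X).source,
      (hd'.toOpenPartialHomeomorph X).open_source.mem_nhds hd'.mem_toOpenPartialHomeomorph_source, ?_⟩
    have := (hd'.toOpenPartialHomeomorph X).injOn
    rwa [hd'.toOpenPartialHomeomorph_coe] at this
  -- properness bound
  have hbound : ∀ x, ‖x‖ ≤ max R ‖X x‖ := by
    intro x
    by_cases h : R ≤ ‖x‖
    · rw [hid x h]; exact le_max_right _ _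
    · exact le_max_of_le_left (le_of_not_ge h)
  -- range is open
  have hopen_range : IsOpen (range X) := by
    rw [isOpen_iff_mem_nhds]
    rintro y ⟨x, rfl⟩
    rw [← (key x).1]
    exact Filter.range_mem_map
  -- range is closed
  have hclosed_range : IsClosed (range X) := by
    apply IsSeqClosed.isClosed
    intro p y hp hpy
    choose x hx using hp
    obtain ⟨C, hC⟩ := (isBounded_range_of_tendsto p hpy).exists_norm_le
    have hxball : ∀ n, x n ∈ closedBall (0 : EuclideanSpace ℝ (Fin d)) (max R C) := by
      intro n
      rw [mem_closedBall_zero_iff]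
      refine (hbound (x n)).trans (max_le_max le_rfl ?_)
      rw [hx n]; exact hC _ (mem_range_self n)
    obtain ⟨a, -, φ, hφ, ha⟩ :=
      (isCompact_closedBall (0 : EuclideanSpace ℝ (Fin d)) (max R C)).tendsto_subseq hxball
    refine ⟨a, tendsto_nhds_unique ?_ (hpy.comp hφ.tendsto_atTop)⟩
    have : Tendsto (X ∘ x ∘ φ) atTop (𝓝 (X a)) := (hcont.tendsto a).comp ha
    simpa [Function.comp_def, hx] using this
  -- surjectivity
  have hsurj : Function.Surjective X := by
    have : range X = univ :=
      (isClopen_iff.mp ⟨hclosed_range, hopen_range⟩).resolve_left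
        (Nonempty.ne_empty ⟨X 0, mem_range_self 0⟩)
    exact range_eq_univ.mp this
  -- the set of points with two distinct preimages
  set A : Set (EuclideanSpace ℝ (Fin d)) :=
    {y | ∃ a b, a ≠ b ∧ X a = y ∧ X b = y} with hA
  have hAopen : IsOpen A := by
    rw [isOpen_iff_mem_nhds]
    rintro y ⟨a, b, hab, rfl, hb⟩
    obtain ⟨U, V, hU, hV, haU, hbV, hUV⟩ := t2_separation hab
    have h1 : X '' U ∈ 𝓝 (X a) := by rw [← (key a).1]; exact image_mem_map (hU.mem_nhds haU)
    have h2 : X '' V ∈ 𝓝 (X a) := by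
      rw [← hb, ← (key b).1]; exact image_mem_map (hV.mem_nhds hbV)
    filter_upwards [h1, h2]
    rintro z ⟨u, huU, hu⟩ ⟨v, hvV, hv⟩
    exact ⟨u, v, hUV.ne_of_mem huU hvV, hu, hv⟩
  have hAclosed : IsClosed A := by
    rw [← isOpen_compl_iff, isOpen_iff_mem_nhds]
    intro y hy
    by_contra h
    obtain ⟨x, hxy⟩ := hsurj y
    obtain ⟨s, hs, hsinj⟩ := (key x).2
    have huniq : ∀ z, X z = y → z = x := by
      intro z hz
      by_contra hzx
      exact hy ⟨z, x, hzx, hz, hxy⟩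
    have hyc : y ∈ closure A := by
      rw [mem_closure_iff_nhds]
      intro t ht
      rcases (t ∩ A).eq_empty_or_nonempty with he | hne
      · refine absurd (mem_of_superset ht ?_) h
        intro z hz hzA
        exact (eq_empty_iff_forall_notMem.mp he z) ⟨hz, hzA⟩
      · exact hne
    rw [mem_closure_iff_seq_limit] at hyc
    obtain ⟨p, hpA, hpy⟩ := hyc
    choose a b hab ha hb using hpA
    obtain ⟨C, hC⟩ := (isBounded_range_of_tendsto p hpy).exists_norm_le
    have hball : ∀ (u : ℕ → EuclideanSpace ℝ (Fin d)), (∀ n, X (u n) = p n) → ∀ n,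
        u n ∈ closedBall (0 : EuclideanSpace ℝ (Fin d)) (max R C) := by
      intro u hu n
      rw [mem_closedBall_zero_iff]
      refine (hbound (u n)).trans (max_le_max le_rfl ?_)
      rw [hu n]; exact hC _ (mem_range_self n)
    obtain ⟨α, -, φ, hφ, hαa⟩ :=
      (isCompact_closedBall (0 : EuclideanSpace ℝ (Fin d)) (max R C)).tendsto_subseq
        (hball a ha)
    obtain ⟨β, -, ψ, hψ, hβb⟩ :=
      (isCompact_closedBall (0 : EuclideanSpace ℝ (Fin d)) (max R C)).tendsto_subseq
        (x := fun n => b (φ n)) (fun n => hball b hb (φ n))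
    have hαβ : Tendsto (fun n => a (φ (ψ n))) atTop (𝓝 α) := hαa.comp hψ.tendsto_atTop
    have hpφψ : Tendsto (fun n => p (φ (ψ n))) atTop (𝓝 y) :=
      hpy.comp ((hφ.comp hψ).tendsto_atTop)
    have hXα : X α = y := by
      refine tendsto_nhds_unique (Tendsto.congr (fun n => ?_)
        ((hcont.tendsto α).comp hαβ)) hpφψ
      exact (ha _)
    have hXβ : X β = y := by
      refine tendsto_nhds_unique (Tendsto.congr (fun n => ?_)
        ((hcont.tendsto β).comp hβb)) hpφψ
      exact (hb _)
    rw [huniq α hXα] at hαβ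
    rw [huniq β hXβ] at hβb
    have hae : ∀ᶠ n in atTop, a (φ (ψ n)) ∈ s := hαβ.eventually_mem hs
    have hbe : ∀ᶠ n in atTop, b (φ (ψ n)) ∈ s := hβb.eventually_mem hs
    obtain ⟨n, han, hbn⟩ := (hae.and hbe).exists
    refine hab (φ (ψ n)) (hsinj han hbn ?_)
    rw [ha, hb]
  -- A is empty
  have hA0 : A = ∅ := by
    obtain ⟨M, hM⟩ := (isCompact_closedBall (0 : EuclideanSpace ℝ (Fin d))
      R).exists_bound_of_continuousOn hcont.continuousOn
    obtain ⟨y0, hy0⟩ := exists_norm_eq (EuclideanSpace ℝ (Fin d))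
      (le_of_lt (by positivity : (0:ℝ) < max R M + 1))
    have hy0R : R ≤ ‖y0‖ := by
      rw [hy0]; linarith [le_max_left R M]
    have huniq : ∀ z, X z = y0 → z = y0 := by
      intro z hz
      by_cases h : R ≤ ‖z‖
      · rw [← hz, hid z h]
      · exfalso
        have hzM : ‖X z‖ ≤ M := hM z (by rw [mem_closedBall_zero_iff]; exact le_of_not_ge h)
        rw [hz, hy0] at hzM
        have := le_max_right R M
        linarith
    have hy0A : y0 ∉ A := by
      rintro ⟨a, b, hab, ha, hb⟩
      exact hab ((huniq a ha).trans (huniq b hb).symm)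
    refine (isClopen_iff.mp ⟨hAclosed, hAopen⟩).resolve_right fun h => ?_
    exact hy0A (h ▸ mem_univ y0)
  refine ⟨fun a b hXab => ?_, hsurj⟩
  by_contra hne
  have hmem : X a ∈ A := ⟨a, b, hne, rfl, hXab.symm⟩
  rw [hA0] at hmem
  exact hmem
end
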